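/- With notation as in the context, for every $n \geq 1$: the rational function $w \mapsto J_n(w^{-1}, z_2, \dots, z_n)$, regarded as a rational function in the single variable $w$ over the field $F(z_2, \dots, z_n)$, has no pole at $w = 0$, and its value at $w = 0$ equals $q^r \cdot J_{n-1}(z_2, \dots, z_n)$. (This is the residue computation $\mathrm{Res}_{z_1 = \infty}\, J_n/z_1 = q^r J_{n-1}$ from the proof of Lemma 3.3 of the paper.) -/

import Mathlib

open scoped BigOperators

noncomputable section

/-- `ζ(w) = (1 - w q₁)(1 - w q₂) / ((1 - w)(1 - w q₁ q₂))`. -/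
def zetaF {L : Type*} [Field L] (q₁ q₂ w : L) : L :=
  ((1 - w * q₁) * (1 - w * q₂)) / ((1 - w) * (1 - w * (q₁ * q₂)))

/-- The rational expression `J_n` of equation (3.34) of the paper, evaluated at
`z_1 = z 0, …, z_n = z (n-1)`, where `ι : F →+* L` embeds the field of constants.
(By convention `J_0 = 1`, which this definition satisfies as all products are empty.) -/
def Jfun {F L : Type*} [Field F] [Field L] (ι : F →+* L) (q₁ q₂ m : F)
    (r : ℕ) (x x' : Fin r → F) (n : ℕ) (z : ℕ → L) : L :=
  (ι q₁ * ι q₂) ^ (r * n) *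
    ((∏ i ∈ Finset.range (n - 1), (1 - ι q₁ * ι q₂ * z (i + 1) / z i)) *
      ∏ i ∈ Finset.range n, ∏ j ∈ Finset.Ico (i + 1) n, zetaF (ι q₁) (ι q₂) (z j / z i))⁻¹ *
    ∏ i ∈ Finset.range n,
      (∏ a : Fin r, (1 - ι (x' a) / (z i * (ι q₁ * ι q₂)))) /
        ∏ a : Fin r, (1 - ι m * ι (x a) / (z i * (ι q₁ * ι q₂)))

/-! ### Auxiliary theory: rational functions regular at `0` -/

section GoodSection

variable {K : Type*} [Field K]

/-- `f` is regular at `0` with value `v`: there is a representation `f = p/q` with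
`q(0) ≠ 0` and `p(0) = v q(0)`. -/
def Good (f : RatFunc K) (v : K) : Prop :=
  ∃ p q : Polynomial K, Polynomial.eval 0 q ≠ 0 ∧
    f * algebraMap (Polynomial K) (RatFunc K) q = algebraMap (Polynomial K) (RatFunc K) p ∧
    Polynomial.eval 0 p = v * Polynomial.eval 0 q

theorem Good.congr {f : RatFunc K} {a b : K} (h : Good f a) (e : a = b) : Good f b := e ▸ h

theorem good_algebraMap (p : Polynomial K) :
    Good (algebraMap (Polynomial K) (RatFunc K) p) (Polynomial.eval 0 p) :=
  ⟨p, 1, by simp, by simp, by simp⟩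

theorem good_C (c : K) : Good (RatFunc.C c) c := by
  simpa using good_algebraMap (Polynomial.C c)

theorem good_X : Good (RatFunc.X : RatFunc K) 0 := by
  simpa using good_algebraMap (Polynomial.X (R := K))

theorem good_one : Good (1 : RatFunc K) 1 := by simpa using good_C (1 : K)

theorem Good.mul {f g : RatFunc K} {a b : K} (hf : Good f a) (hg : Good g b) :
    Good (f * g) (a * b) := by
  obtain ⟨p₁, q₁, h₁, e₁, v₁⟩ := hf
  obtain ⟨p₂, q₂, h₂, e₂, v₂⟩ := hg
  refine ⟨p₁ * p₂, q₁ * q₂, by simp [h₁, h₂], ?_, by simp [v₁, v₂]; ring⟩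
  rw [map_mul, map_mul, mul_mul_mul_comm, e₁, e₂]

theorem Good.sub {f g : RatFunc K} {a b : K} (hf : Good f a) (hg : Good g b) :
    Good (f - g) (a - b) := by
  obtain ⟨p₁, q₁, h₁, e₁, v₁⟩ := hf
  obtain ⟨p₂, q₂, h₂, e₂, v₂⟩ := hg
  refine ⟨p₁ * q₂ - p₂ * q₁, q₁ * q₂, by simp [h₁, h₂], ?_, by simp [v₁, v₂]; ring⟩
  rw [map_sub, map_mul, map_mul, map_mul, ← e₁, ← e₂]
  ring

theorem Good.inv {f : RatFunc K} {a : K} (hf : Good f a) (ha : a ≠ 0) : Good f⁻¹ a⁻¹ := by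
  obtain ⟨p, q, hq, hfq, hv⟩ := hf
  have hp0 : Polynomial.eval 0 p ≠ 0 := by rw [hv]; exact mul_ne_zero ha hq
  have hpne : p ≠ 0 := by intro h; rw [h] at hp0; simp at hp0
  have hfne : f ≠ 0 := by
    intro h0
    rw [h0, zero_mul] at hfq
    exact hpne ((map_eq_zero_iff _ (RatFunc.algebraMap_injective K)).mp hfq.symm)
  refine ⟨q, p, hp0, ?_, ?_⟩
  · rw [← hfq, ← mul_assoc, inv_mul_cancel₀ hfne, one_mul]
  · rw [hv, inv_mul_cancel_left₀ ha]

theorem Good.div {f g : RatFunc K} {a b : K} (hf : Good f a) (hg : Good g b) (hb : b ≠ 0) :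
    Good (f / g) (a / b) := by
  simpa [div_eq_mul_inv] using hf.mul (hg.inv hb)

theorem Good.pow {f : RatFunc K} {a : K} (hf : Good f a) (k : ℕ) : Good (f ^ k) (a ^ k) := by
  induction k with
  | zero => simpa using (good_one : Good (1 : RatFunc K) 1)
  | succ k ih => rw [pow_succ, pow_succ]; exact ih.mul hf

theorem good_prod {ι : Type*} (s : Finset ι) (f : ι → RatFunc K) (v : ι → K)
    (h : ∀ i ∈ s, Good (f i) (v i)) : Good (∏ i ∈ s, f i) (∏ i ∈ s, v i) := by
  classical
  induction s using Finset.cons_induction with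
  | empty => simpa using (good_one : Good (1 : RatFunc K) 1)
  | cons a s ha ih =>
    rw [Finset.prod_cons, Finset.prod_cons]
    exact (h a (Finset.mem_cons_self a s)).mul (ih fun i hi => h i (Finset.mem_cons_of_mem hi))

theorem good_of_eq_C {f : RatFunc K} {v : K} (h : f = RatFunc.C v) : Good f v :=
  h ▸ good_C v

theorem Good.zeta {W : RatFunc K} {ω a b : K} (hW : Good W ω) (h1 : 1 - ω ≠ 0)
    (h2 : 1 - ω * (a * b) ≠ 0) :
    Good (zetaF (RatFunc.C a) (RatFunc.C b) W) (zetaF a b ω) := by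
  unfold zetaF
  exact ((good_one.sub (hW.mul (good_C a))).mul (good_one.sub (hW.mul (good_C b)))).div
    ((good_one.sub hW).mul (good_one.sub (hW.mul ((good_C a).mul (good_C b)))))
    (mul_ne_zero h1 h2)

theorem Good.result {f : RatFunc K} {v : K} (h : Good f v) :
    Polynomial.eval 0 (RatFunc.denom f) ≠ 0 ∧
      Polynomial.eval 0 (RatFunc.num f) / Polynomial.eval 0 (RatFunc.denom f) = v := by
  obtain ⟨p, q, hq, hfq, hv⟩ := h
  have hdne : algebraMap (Polynomial K) (RatFunc K) f.denom ≠ 0 :=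
    RatFunc.algebraMap_ne_zero (RatFunc.denom_ne_zero f)
  have h2 : (algebraMap (Polynomial K) (RatFunc K) f.num /
      algebraMap (Polynomial K) (RatFunc K) f.denom) * algebraMap (Polynomial K) (RatFunc K) q =
      algebraMap (Polynomial K) (RatFunc K) p := by
    rw [RatFunc.num_div_denom]; exact hfq
  rw [div_mul_eq_mul_div, div_eq_iff hdne] at h2
  have key : f.num * q = p * f.denom :=
    RatFunc.algebraMap_injective K (by rw [map_mul, map_mul]; exact h2)
  have e : Polynomial.eval 0 f.num * Polynomial.eval 0 q =
      v * Polynomial.eval 0 q * Polynomial.eval 0 f.denom := by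
    have := congrArg (Polynomial.eval 0) key
    rw [Polynomial.eval_mul, Polynomial.eval_mul, hv] at this
    linear_combination this
  have hd0 : Polynomial.eval 0 (RatFunc.denom f) ≠ 0 := by
    intro hd
    have hnum : Polynomial.eval 0 f.num = 0 := by
      rw [hd, mul_zero] at e
      exact (mul_eq_zero.mp e).resolve_right hq
    obtain ⟨a, b, hab⟩ := RatFunc.isCoprime_num_denom f
    have := congrArg (Polynomial.eval 0) hab
    simp [hnum, hd] at this
  refine ⟨hd0, ?_⟩
  have hnv : Polynomial.eval 0 f.num = v * Polynomial.eval 0 (RatFunc.denom f) := by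
    apply mul_right_cancel₀ hq
    rw [e]; ring
  rw [hnv, mul_div_assoc, div_self hd0, mul_one]

end GoodSection

/-! ### Nonvanishing lemmas in the fraction field of a multivariate polynomial ring -/

section NZ

variable {F : Type} [Field F] {σ : Type*}

private theorem base1 {i j : σ} (hij : i ≠ j) (c : F) :
    algebraMap (MvPolynomial σ F) (FractionRing (MvPolynomial σ F)) (MvPolynomial.X i) ≠
      algebraMap (MvPolynomial σ F) (FractionRing (MvPolynomial σ F)) (MvPolynomial.C c) *
        algebraMap (MvPolynomial σ F) (FractionRing (MvPolynomial σ F)) (MvPolynomial.X j) := by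
  classical
  intro h
  rw [← map_mul] at h
  have h' := IsFractionRing.injective (MvPolynomial σ F)
    (FractionRing (MvPolynomial σ F)) h
  have h2 := congrArg (MvPolynomial.coeff (Finsupp.single i 1)) h'
  rw [MvPolynomial.coeff_C_mul, MvPolynomial.coeff_X', MvPolynomial.coeff_X',
    if_pos rfl, if_neg (fun hh => hij ((Finsupp.single_left_inj one_ne_zero).mp hh).symm)] at h2
  simp at h2

private theorem base2 (i : σ) (c d : F) (hd : d ≠ 0) :
    algebraMap (MvPolynomial σ F) (FractionRing (MvPolynomial σ F)) (MvPolynomial.X i) *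
      algebraMap (MvPolynomial σ F) (FractionRing (MvPolynomial σ F)) (MvPolynomial.C d) ≠
      algebraMap (MvPolynomial σ F) (FractionRing (MvPolynomial σ F)) (MvPolynomial.C c) := by
  classical
  intro h
  rw [← map_mul] at h
  have h' := IsFractionRing.injective (MvPolynomial σ F)
    (FractionRing (MvPolynomial σ F)) h
  have h2 := congrArg (MvPolynomial.coeff (Finsupp.single i 1)) h'
  rw [mul_comm] at h2
  rw [MvPolynomial.coeff_C_mul, MvPolynomial.coeff_X, if_pos rfl, mul_one, MvPolynomial.coeff_C,
    if_neg (fun hh => one_ne_zero (Finsupp.single_eq_zero.mp hh.symm))] at h2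
  exact hd h2

theorem Zmap_ne_zero (i : σ) :
    algebraMap (MvPolynomial σ F) (FractionRing (MvPolynomial σ F)) (MvPolynomial.X i) ≠ 0 := by
  rw [map_ne_zero_iff _ (IsFractionRing.injective (MvPolynomial σ F)
    (FractionRing (MvPolynomial σ F)))]
  exact MvPolynomial.X_ne_zero i

/-- `1 - c·X_j/X_i ≠ 0` (constant on the left). -/
theorem nz_L1 {i j : σ} (hij : i ≠ j) (c : F) :
    (1 : FractionRing (MvPolynomial σ F)) -
      algebraMap (MvPolynomial σ F) (FractionRing (MvPolynomial σ F)) (MvPolynomial.C c) *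
        algebraMap (MvPolynomial σ F) (FractionRing (MvPolynomial σ F)) (MvPolynomial.X j) /
        algebraMap (MvPolynomial σ F) (FractionRing (MvPolynomial σ F)) (MvPolynomial.X i) ≠
      0 := by
  intro h
  rw [sub_eq_zero, eq_comm, div_eq_one_iff_eq (Zmap_ne_zero i)] at h
  exact base1 hij c h.symm

/-- `1 - (X_j/X_i)·c ≠ 0` (constant on the right). -/
theorem nz_L2 {i j : σ} (hij : i ≠ j) (c : F) :
    (1 : FractionRing (MvPolynomial σ F)) -
      algebraMap (MvPolynomial σ F) (FractionRing (MvPolynomial σ F)) (MvPolynomial.X j) /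
        algebraMap (MvPolynomial σ F) (FractionRing (MvPolynomial σ F)) (MvPolynomial.X i) *
        algebraMap (MvPolynomial σ F) (FractionRing (MvPolynomial σ F)) (MvPolynomial.C c) ≠
      0 := by
  intro h
  rw [sub_eq_zero, div_mul_eq_mul_div, eq_comm, div_eq_one_iff_eq (Zmap_ne_zero i)] at h
  exact base1 hij c (by rw [← h]; ring)

/-- `1 - X_j/X_i ≠ 0`. -/
theorem nz_L3 {i j : σ} (hij : i ≠ j) :
    (1 : FractionRing (MvPolynomial σ F)) -
      algebraMap (MvPolynomial σ F) (FractionRing (MvPolynomial σ F)) (MvPolynomial.X j) /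
        algebraMap (MvPolynomial σ F) (FractionRing (MvPolynomial σ F)) (MvPolynomial.X i) ≠
      0 := by
  have := nz_L2 (F := F) hij 1
  simpa using this

/-- `1 - c/(X_i d) ≠ 0` for `d ≠ 0`. -/
theorem nz_L4 (i : σ) (c d : F) (hd : d ≠ 0) :
    (1 : FractionRing (MvPolynomial σ F)) -
      algebraMap (MvPolynomial σ F) (FractionRing (MvPolynomial σ F)) (MvPolynomial.C c) /
        (algebraMap (MvPolynomial σ F) (FractionRing (MvPolynomial σ F)) (MvPolynomial.X i) *
          algebraMap (MvPolynomial σ F) (FractionRing (MvPolynomial σ F)) (MvPolynomial.C d)) ≠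
      0 := by
  have hdK : algebraMap (MvPolynomial σ F) (FractionRing (MvPolynomial σ F))
      (MvPolynomial.C d) ≠ 0 := by
    rw [map_ne_zero_iff _ (IsFractionRing.injective (MvPolynomial σ F)
      (FractionRing (MvPolynomial σ F)))]
    exact fun hh => hd (by simpa using congrArg (MvPolynomial.coeff 0) hh)
  intro h
  rw [sub_eq_zero, eq_comm, div_eq_one_iff_eq (mul_ne_zero (Zmap_ne_zero i) hdK)] at h
  exact base2 i c d hd h.symm

end NZ

theorem prod_shift {M : Type*} [CommMonoid M] (f : ℕ → M) (hf : f 0 = 1) (k : ℕ) :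
    ∏ i ∈ Finset.range k, f i = ∏ i ∈ Finset.range (k - 1), f (i + 1) := by
  cases k with
  | zero => simp
  | succ k => rw [Finset.prod_range_succ', hf, mul_one]; simp

set_option maxHeartbeats 2000000 in
set_option synthInstance.maxHeartbeats 400000 in
/-- The rational function `w ↦ J_n(w⁻¹, z_2, …, z_n)`, regarded as a
rational function in the single variable `w` over the field `F(z_2, …, z_n)`, has no pole
at `w = 0`, and its value at `w = 0` equals `q^r ⬝ J_{n-1}(z_2, …, z_n)`. -/
theorem stmt_5 {F : Type} [Field F] (r : ℕ) (hr : 1 ≤ r) (q₁ q₂ m : F)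
    (x x' : Fin r → F) (hq₁ : q₁ ≠ 0) (hq₂ : q₂ ≠ 0) (hm : m ≠ 0)
    (hx : ∀ a, x a ≠ 0) (hx' : ∀ a, x' a ≠ 0) (n : ℕ) (hn : 1 ≤ n) :
    -- `K = F(z_2, …, z_n)`, the rational function field in the variables other than `z_1`
    let K := FractionRing (MvPolynomial {j : ℕ // j < n ∧ j ≠ 0} F)
    let ιK : F →+* K :=
      (algebraMap (MvPolynomial {j : ℕ // j < n ∧ j ≠ 0} F) K).comp MvPolynomial.C
    let Z : {j : ℕ // j < n ∧ j ≠ 0} → K := fun s =>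
      algebraMap (MvPolynomial {j : ℕ // j < n ∧ j ≠ 0} F) K (MvPolynomial.X s)
    -- `w ↦ J_n(w⁻¹, z_2, …, z_n)`, a one-variable rational function in `w` over `K`
    let Jn : RatFunc K := Jfun ((RatFunc.C).comp ιK) q₁ q₂ m r x x' n
      (fun j => if h : j < n ∧ j ≠ 0 then RatFunc.C (Z ⟨j, h⟩) else RatFunc.X⁻¹)
    -- `J_{n-1}(z_2, …, z_n)`, an element of `K`
    let Jprev : K := Jfun ιK q₁ q₂ m r x x' (n - 1)
      (fun j => if h : j + 1 < n ∧ j + 1 ≠ 0 then Z ⟨j + 1, h⟩ else 1)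
    -- no pole at `w = 0`, and the value there is `q^r ⬝ J_{n-1}(z_2, …, z_n)`
    Polynomial.eval 0 (RatFunc.denom Jn) ≠ 0 ∧
      Polynomial.eval 0 (RatFunc.num Jn) / Polynomial.eval 0 (RatFunc.denom Jn) =
        ιK ((q₁ * q₂) ^ r) * Jprev := by
  obtain ⟨k, rfl⟩ : ∃ k, n = k + 1 := ⟨n - 1, by omega⟩
  intro K ιK Z Jn Jprev
  classical
  set zf : ℕ → RatFunc K := fun j =>
    if h : j < k + 1 ∧ j ≠ 0 then RatFunc.C (Z ⟨j, h⟩) else RatFunc.X⁻¹ with hzf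
  set u : ℕ → K := fun j => if h : j < k + 1 ∧ j ≠ 0 then Z ⟨j, h⟩ else 1 with hu
  set g1 : ℕ → K := fun i => if i = 0 then 1 else 1 - ιK q₁ * ιK q₂ * u (i + 1) / u i with hg1
  set g2 : ℕ → ℕ → K := fun i j => if i = 0 then 1 else
    zetaF (ιK q₁) (ιK q₂) (u j / u i) with hg2
  set g3 : ℕ → K := fun i => if i = 0 then 1 else
    (∏ a : Fin r, (1 - ιK (x' a) / (u i * (ιK q₁ * ιK q₂)))) /
      ∏ a : Fin r, (1 - ιK m * ιK (x a) / (u i * (ιK q₁ * ιK q₂))) with hg3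
  have hιne : ∀ c : F, c ≠ 0 → ιK c ≠ 0 := fun c hc h0 =>
    hc (ιK.injective (by rw [h0, map_zero]))
  have habne : ιK q₁ * ιK q₂ ≠ 0 := mul_ne_zero (hιne q₁ hq₁) (hιne q₂ hq₂)
  have hu1 : ∀ (j : ℕ) (h : j < k + 1 ∧ j ≠ 0), u j = Z ⟨j, h⟩ := fun j h => by
    rw [hu]; exact dif_pos h
  have GB1 : Good (∏ i ∈ Finset.range k,
        (1 - RatFunc.C (ιK q₁) * RatFunc.C (ιK q₂) * zf (i + 1) / zf i))
      (∏ i ∈ Finset.range k, g1 i) := by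
    refine good_prod _ _ g1 fun i hi => ?_
    rw [Finset.mem_range] at hi
    simp only [hzf]
    by_cases h0 : i = 0
    · subst h0
      rw [dif_neg (by simp : ¬((0 : ℕ) < k + 1 ∧ (0 : ℕ) ≠ 0)),
        dif_pos (show 0 + 1 < k + 1 ∧ 0 + 1 ≠ 0 from ⟨by omega, by omega⟩), div_inv_eq_mul]
      refine (good_one.sub ((((good_C _).mul (good_C _)).mul (good_C _)).mul good_X)).congr ?_
      simp [hg1]
    · rw [dif_pos (show i < k + 1 ∧ i ≠ 0 from ⟨by omega, h0⟩),
        dif_pos (show i + 1 < k + 1 ∧ i + 1 ≠ 0 from ⟨by omega, by omega⟩)]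
      refine good_of_eq_C ?_
      simp only [hg1, if_neg h0, hu1 i ⟨by omega, h0⟩, hu1 (i + 1) ⟨by omega, by omega⟩]
      rw [map_sub, map_one, map_div₀, map_mul, map_mul]
  have GB2 : Good (∏ i ∈ Finset.range (k + 1), ∏ j ∈ Finset.Ico (i + 1) (k + 1),
        zetaF (RatFunc.C (ιK q₁)) (RatFunc.C (ιK q₂)) (zf j / zf i))
      (∏ i ∈ Finset.range (k + 1), ∏ j ∈ Finset.Ico (i + 1) (k + 1), g2 i j) := by
    refine good_prod _ _ (fun i => ∏ j ∈ Finset.Ico (i + 1) (k + 1), g2 i j) fun i hi => ?_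
    rw [Finset.mem_range] at hi
    refine good_prod _ _ (g2 i) fun j hj => ?_
    rw [Finset.mem_Ico] at hj
    simp only [hzf]
    by_cases h0 : i = 0
    · subst h0
      rw [dif_neg (by simp : ¬((0 : ℕ) < k + 1 ∧ (0 : ℕ) ≠ 0)),
        dif_pos (show j < k + 1 ∧ j ≠ 0 from ⟨hj.2, by omega⟩), div_inv_eq_mul]
      refine (((good_C _).mul good_X).zeta (by simp) (by simp)).congr ?_
      simp [hg2, zetaF]
    · rw [dif_pos (show i < k + 1 ∧ i ≠ 0 from ⟨by omega, h0⟩),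
        dif_pos (show j < k + 1 ∧ j ≠ 0 from ⟨hj.2, by omega⟩)]
      refine good_of_eq_C ?_
      simp only [hg2, if_neg h0, hu1 i ⟨by omega, h0⟩, hu1 j ⟨hj.2, by omega⟩]
      simp [zetaF, map_div₀]
  have hBne : (∏ i ∈ Finset.range k, g1 i) *
      (∏ i ∈ Finset.range (k + 1), ∏ j ∈ Finset.Ico (i + 1) (k + 1), g2 i j) ≠ 0 := by
    refine mul_ne_zero ?_ ?_
    · rw [Finset.prod_ne_zero_iff]
      intro i hi
      rw [Finset.mem_range] at hi
      by_cases h0 : i = 0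
      · simp [hg1, h0]
      · simp only [hg1, if_neg h0, hu1 i ⟨by omega, h0⟩,
          hu1 (i + 1) ⟨by omega, by omega⟩, ← map_mul ιK]
        exact nz_L1 (fun hh => by rw [Subtype.mk.injEq] at hh; omega) (q₁ * q₂)
    · rw [Finset.prod_ne_zero_iff]
      intro i hi
      rw [Finset.prod_ne_zero_iff]
      intro j hj
      rw [Finset.mem_range] at hi
      rw [Finset.mem_Ico] at hj
      by_cases h0 : i = 0
      · simp [hg2, h0]
      · have hijne : (⟨i, by omega, h0⟩ : {j : ℕ // j < k + 1 ∧ j ≠ 0}) ≠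
            ⟨j, hj.2, by omega⟩ := fun hh => by rw [Subtype.mk.injEq] at hh; omega
        simp only [hg2, if_neg h0, hu1 i ⟨by omega, h0⟩, hu1 j ⟨hj.2, by omega⟩]
        unfold zetaF
        refine div_ne_zero (mul_ne_zero ?_ ?_) (mul_ne_zero ?_ ?_)
        · exact nz_L2 hijne q₁
        · exact nz_L2 hijne q₂
        · exact nz_L3 hijne
        · rw [← map_mul ιK]; exact nz_L2 hijne (q₁ * q₂)
  have GC3 : Good (∏ i ∈ Finset.range (k + 1),
        ((∏ a : Fin r, (1 - RatFunc.C (ιK (x' a)) / (zf i * (RatFunc.C (ιK q₁) * RatFunc.C (ιK q₂))))) /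
          ∏ a : Fin r, (1 - RatFunc.C (ιK m) * RatFunc.C (ιK (x a)) /
            (zf i * (RatFunc.C (ιK q₁) * RatFunc.C (ιK q₂))))))
      (∏ i ∈ Finset.range (k + 1), g3 i) := by
    refine good_prod _ _ g3 fun i hi => ?_
    rw [Finset.mem_range] at hi
    simp only [hzf]
    by_cases h0 : i = 0
    · subst h0
      rw [dif_neg (by simp : ¬((0 : ℕ) < k + 1 ∧ (0 : ℕ) ≠ 0))]
      simp only [div_mul_eq_div_div, div_inv_eq_mul]
      refine ((good_prod _ _ (fun _ => (1 : K)) fun a _ => ?_).div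
        (good_prod _ _ (fun _ => (1 : K)) fun a _ => ?_) (by simp)).congr ?_
      · refine (good_one.sub ((((good_C _).mul good_X).div
          (good_C _) (hιne q₁ hq₁)).div (good_C _) (hιne q₂ hq₂))).congr ?_
        simp
      · refine (good_one.sub (((((good_C _).mul (good_C _)).mul good_X).div
          (good_C _) (hιne q₁ hq₁)).div (good_C _) (hιne q₂ hq₂))).congr ?_
        simp
      · simp [hg3]
    · rw [dif_pos (show i < k + 1 ∧ i ≠ 0 from ⟨by omega, h0⟩)]
      refine good_of_eq_C ?_
      simp only [hg3, if_neg h0, hu1 i ⟨by omega, h0⟩]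
      simp [map_div₀, map_prod]
  have efin : (ιK q₁ * ιK q₂) ^ (r * (k + 1)) *
      ((∏ i ∈ Finset.range k, g1 i) *
        (∏ i ∈ Finset.range (k + 1), ∏ j ∈ Finset.Ico (i + 1) (k + 1), g2 i j))⁻¹ *
      (∏ i ∈ Finset.range (k + 1), g3 i) = ιK ((q₁ * q₂) ^ r) * Jprev := by
    have hJp : Jprev = Jfun ιK q₁ q₂ m r x x' k (fun j => u (j + 1)) := by
      rw [hu]
      rfl
    rw [hJp]
    simp only [Jfun, Nat.add_sub_cancel]
    have e1 : ∏ i ∈ Finset.range k, g1 i =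
        ∏ i ∈ Finset.range (k - 1), (1 - ιK q₁ * ιK q₂ * u (i + 1 + 1) / u (i + 1)) := by
      rw [prod_shift g1 (by simp [hg1]) k]
      exact Finset.prod_congr rfl fun i _ => by simp [hg1]
    have e2 : ∏ i ∈ Finset.range (k + 1), ∏ j ∈ Finset.Ico (i + 1) (k + 1), g2 i j =
        ∏ i ∈ Finset.range k, ∏ j ∈ Finset.Ico (i + 1) k,
          zetaF (ιK q₁) (ιK q₂) (u (j + 1) / u (i + 1)) := by
      rw [prod_shift _ (Finset.prod_eq_one fun j _ => by simp [hg2]) (k + 1)]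
      simp only [Nat.add_sub_cancel]
      refine Finset.prod_congr rfl fun i _ => ?_
      rw [Finset.prod_Ico_eq_prod_range, Finset.prod_Ico_eq_prod_range,
        show k + 1 - (i + 1 + 1) = k - (i + 1) from by omega]
      refine Finset.prod_congr rfl fun t _ => ?_
      simp [hg2, show i + 1 + 1 + t = i + 1 + t + 1 from by omega]
    have e3 : ∏ i ∈ Finset.range (k + 1), g3 i =
        ∏ i ∈ Finset.range k,
          ((∏ a : Fin r, (1 - ιK (x' a) / (u (i + 1) * (ιK q₁ * ιK q₂)))) /
            ∏ a : Fin r, (1 - ιK m * ιK (x a) / (u (i + 1) * (ιK q₁ * ιK q₂)))) := by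
      rw [prod_shift g3 (by simp [hg3]) (k + 1)]
      simp only [Nat.add_sub_cancel]
      exact Finset.prod_congr rfl fun i _ => by simp [hg3]
    rw [e1, e2, e3, map_pow, map_mul,
      show r * (k + 1) = r * k + r from by ring, pow_add]
    ring
  have main : Good Jn (ιK ((q₁ * q₂) ^ r) * Jprev) := by
    show Good (Jfun ((RatFunc.C).comp ιK) q₁ q₂ m r x x' (k + 1) zf)
      (ιK ((q₁ * q₂) ^ r) * Jprev)
    simp only [Jfun, RingHom.comp_apply, Nat.add_sub_cancel]
    exact Good.congr (((((good_C (ιK q₁)).mul (good_C (ιK q₂))).pow (r * (k + 1))).mul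
      ((GB1.mul GB2).inv hBne)).mul GC3) efin
  exact main.result
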